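/- Let f : (0,∞)^d → (0,∞) be a measurable radially regularly varying function with limit function φ, i.e. f(tx)/f(te) → φ(x) > 0 as t → ∞ for every x ∈ (0,∞)^d, where e = (d^{-1/2},...,d^{-1/2}). Then there exists ρ ∈ ℝ such that φ is homogeneous of degree ρ: φ(sx) = s^ρ φ(x) for every s > 0 and every x ∈ (0,∞)^d, and φ(e) = 1. -/

import Mathlib

open Filter Topology MeasureTheory Set Pointwise

/-- A measurable additive function `ℝ → ℝ` is linear (measurable Cauchy functional equation). -/
lemma cauchy_of_measurable {h : ℝ → ℝ} (hmeas : Measurable h)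
    (hadd : ∀ a b : ℝ, h (a + b) = h a + h b) : ∀ x, h x = x * h 1 := by
  have h0 : h 0 = 0 := by have := hadd 0 0; simp at this; linarith
  set H : ℝ →+ ℝ := { toFun := h, map_zero' := h0, map_add' := hadd } with hH
  have hsub : ∀ a b : ℝ, h (a - b) = h a - h b := fun a b => by
    have := hadd (a - b) b; simp at this; linarith
  -- a set of positive measure where h is bounded
  obtain ⟨n, hn⟩ : ∃ n : ℕ, 0 < volume (Icc (0:ℝ) 1 ∩ {x | |h x| ≤ n}) := by
    by_contra hc
    push_neg at hc
    have hz : volume (⋃ n : ℕ, Icc (0:ℝ) 1 ∩ {x | |h x| ≤ n}) = 0 :=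
      measure_iUnion_null fun n => le_antisymm (hc n) zero_le
    have hcov : Icc (0:ℝ) 1 ⊆ ⋃ n : ℕ, Icc (0:ℝ) 1 ∩ {x | |h x| ≤ n} := by
      intro x hx
      refine mem_iUnion.2 ⟨⌈|h x|⌉₊, hx, ?_⟩
      show |h x| ≤ ((⌈|h x|⌉₊ : ℕ) : ℝ)
      exact Nat.le_ceil _
    have := measure_mono (μ := volume) hcov
    rw [hz, Real.volume_Icc] at this
    norm_num at this
  have hEmeas : MeasurableSet (Icc (0:ℝ) 1 ∩ {x | |h x| ≤ n}) :=
    measurableSet_Icc.inter (hmeas.abs measurableSet_Iic)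
  -- Steinhaus
  have hnhds : (Icc (0:ℝ) 1 ∩ {x | |h x| ≤ n}) - (Icc (0:ℝ) 1 ∩ {x | |h x| ≤ n}) ∈ 𝓝 (0:ℝ) :=
    MeasureTheory.Measure.sub_mem_nhds_zero_of_addHaar_pos volume _ hEmeas hn
  obtain ⟨δ, hδpos, hδ⟩ := Metric.mem_nhds_iff.1 hnhds
  have hbd : ∀ y : ℝ, |y| < δ → |h y| ≤ 2 * n := by
    intro y hy
    have : y ∈ (Icc (0:ℝ) 1 ∩ {x | |h x| ≤ n}) - (Icc (0:ℝ) 1 ∩ {x | |h x| ≤ n}) := by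
      apply hδ
      simpa [Metric.mem_ball, Real.dist_eq] using hy
    obtain ⟨a, ha, b, hb, rfl⟩ := this
    rw [hsub]
    calc |h a - h b| ≤ |h a| + |h b| := abs_sub _ _
      _ ≤ n + n := add_le_add ha.2 hb.2
      _ = 2 * n := by ring
  -- continuity at 0
  have hcont0 : Tendsto h (𝓝 0) (𝓝 0) := by
    rw [Metric.tendsto_nhds_nhds]
    intro ε hε
    obtain ⟨m, hm⟩ := exists_nat_gt (2 * n / ε)
    have hm0 : 0 < (m:ℝ) := lt_of_le_of_lt (div_nonneg (by positivity) hε.le) hm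
    refine ⟨δ / m, by positivity, fun {x} hx => ?_⟩
    rw [Real.dist_eq, sub_zero] at hx ⊢
    have hmx : |(m:ℝ) * x| < δ := by
      rw [abs_mul, abs_of_pos hm0]
      calc (m:ℝ) * |x| < (m:ℝ) * (δ / m) := by
            exact mul_lt_mul_of_pos_left hx hm0
        _ = δ := by field_simp
    have hmh : h ((m:ℝ) * x) = (m:ℝ) * h x := by
      have := map_nsmul H m x
      simpa [hH, nsmul_eq_mul] using this
    have := hbd _ hmx
    rw [hmh, abs_mul, abs_of_pos hm0] at this
    have h2 : |h x| ≤ 2 * n / m := by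
      rw [le_div_iff₀ hm0]; linarith
    have h3 : 2 * (n:ℝ) < m * ε := by
      have := (div_lt_iff₀ hε).1 hm
      nlinarith
    calc |h x| ≤ 2 * n / m := h2
      _ < ε := by rw [div_lt_iff₀ hm0]; nlinarith
  -- continuity everywhere
  have hcont : Continuous h := by
    rw [continuous_iff_continuousAt]
    intro x
    have h1 : Tendsto (fun z : ℝ => z - x) (𝓝 x) (𝓝 0) := by
      have h1' : Tendsto (fun z : ℝ => z - x) (𝓝 x) (𝓝 (x - x)) :=
        (continuous_id.sub continuous_const).tendsto x
      simpa using h1'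
    have key2 : Tendsto (fun z => h x + h (z - x)) (𝓝 x) (𝓝 (h x)) := by
      simpa using tendsto_const_nhds.add (hcont0.comp h1)
    exact key2.congr fun z => by have := hadd x (z - x); simp at this; linarith
  -- agree with linear map on ℚ
  have hrat : ∀ q : ℚ, h (q : ℝ) = (q : ℝ) * h 1 := by
    intro q
    have := map_rat_smul H q (1 : ℝ)
    simpa [hH, Rat.smul_def, smul_eq_mul] using this
  have : h = fun x => x * h 1 := by
    apply Rat.denseRange_cast.equalizer hcont (by continuity)
    funext q
    simpa using hrat q
  intro x; exact congrFun this x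

open Filter Topology

/-- Let `f : (0,∞)^d → (0,∞)` be measurable and radially regularly
varying with limit function `φ`: `f(tx)/f(te) → φ(x) > 0` as `t → ∞`, where
`e = (d^{-1/2},...,d^{-1/2})`. Then there is `ρ ∈ ℝ` such that `φ` is homogeneous
of degree `ρ` (`φ(sx) = s^ρ φ(x)` for `s > 0`, `x ∈ (0,∞)^d`) and `φ(e) = 1`. -/
theorem stmt_4 {d : ℕ} (hd : 0 < d) (e : Fin d → ℝ)
    (he : e = fun _ => (d : ℝ) ^ (-(1 : ℝ) / 2))
    (f φ : (Fin d → ℝ) → ℝ)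
    (hf : ∀ x : Fin d → ℝ, (∀ i, 0 < x i) → 0 < f x)
    (hfmeas : Measurable f)
    (hφpos : ∀ x : Fin d → ℝ, (∀ i, 0 < x i) → 0 < φ x)
    (hlim : ∀ x : Fin d → ℝ, (∀ i, 0 < x i) →
      Tendsto (fun t : ℝ => f (t • x) / f (t • e)) atTop (𝓝 (φ x))) :
    ∃ ρ : ℝ,
      (∀ s : ℝ, 0 < s → ∀ x : Fin d → ℝ, (∀ i, 0 < x i) →
        φ (s • x) = s ^ ρ * φ x) ∧ φ e = 1 := by
  have hdpos : (0:ℝ) < d := Nat.cast_pos.mpr hd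
  have hepos : ∀ i, 0 < e i := by
    intro i; rw [he]; exact Real.rpow_pos_of_pos hdpos _
  have hsp : ∀ (t : ℝ), 0 < t → ∀ x : Fin d → ℝ, (∀ i, 0 < x i) → ∀ i, 0 < (t • x) i := by
    intro t ht x hx i
    simpa [Pi.smul_apply, smul_eq_mul] using mul_pos ht (hx i)
  -- key multiplicative identity
  have key : ∀ s : ℝ, 0 < s → ∀ x : Fin d → ℝ, (∀ i, 0 < x i) →
      φ (s • x) = φ (s • e) * φ x := by
    intro s hs x hx
    have h1 : Tendsto (fun t : ℝ => t * s) atTop atTop :=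
      Tendsto.atTop_mul_const hs tendsto_id
    have hA : Tendsto (fun t : ℝ => f ((t * s) • x) / f ((t * s) • e)) atTop (𝓝 (φ x)) :=
      (hlim x hx).comp h1
    have hB : Tendsto (fun t : ℝ => f (t • (s • e)) / f (t • e)) atTop (𝓝 (φ (s • e))) :=
      hlim (s • e) (hsp s hs e hepos)
    have heq : (fun t : ℝ => f ((t * s) • x) / f ((t * s) • e) * (f (t • (s • e)) / f (t • e)))
        =ᶠ[atTop] fun t : ℝ => f (t • (s • x)) / f (t • e) := by
      filter_upwards [eventually_gt_atTop (0:ℝ)] with t ht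
      have hts : 0 < t * s := mul_pos ht hs
      have hne : f ((t * s) • e) ≠ 0 := (hf _ (hsp _ hts e hepos)).ne'
      have hne2 : f (t • e) ≠ 0 := (hf _ (hsp _ ht e hepos)).ne'
      have h2 : t • (s • e) = (t * s) • e := smul_smul t s e
      have h3 : t • (s • x) = (t * s) • x := smul_smul t s x
      rw [h2, h3]
      field_simp
    have hfin : Tendsto (fun t : ℝ => f (t • (s • x)) / f (t • e)) atTop
        (𝓝 (φ x * φ (s • e))) := Tendsto.congr' heq (hA.mul hB)
    have := tendsto_nhds_unique (hlim (s • x) (hsp s hs x hx)) hfin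
    rw [this]; ring
  -- multiplicativity on the ray
  have gmul : ∀ s t : ℝ, 0 < s → 0 < t → φ ((s * t) • e) = φ (s • e) * φ (t • e) := by
    intro s t hs ht
    have := key s hs (t • e) (hsp t ht e hepos)
    rwa [smul_smul] at this
  -- measurability of u ↦ φ (exp u • e)
  have hGmeas : Measurable fun u : ℝ => φ (Real.exp u • e) := by
    apply measurable_of_tendsto_metrizable'
      (f := fun (n : ℕ) (u : ℝ) => f (((n : ℝ) * Real.exp u) • e) / f ((n : ℝ) • e)) atTop
    · intro n
      apply Measurable.div_const
      apply hfmeas.comp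
      apply measurable_pi_lambda
      intro i
      exact (measurable_const.mul Real.measurable_exp).mul measurable_const
    · rw [tendsto_pi_nhds]
      intro u
      have h1 := (hlim (Real.exp u • e) (hsp _ (Real.exp_pos u) e hepos)).comp
        (tendsto_natCast_atTop_atTop (R := ℝ))
      simpa [Function.comp_def, smul_smul] using h1
  -- the additive function
  set h : ℝ → ℝ := fun u => Real.log (φ (Real.exp u • e)) with hh
  have hmeas : Measurable h := Real.measurable_log.comp hGmeas
  have hadd : ∀ a b : ℝ, h (a + b) = h a + h b := by
    intro a b
    have hpa : 0 < φ (Real.exp a • e) := hφpos _ (hsp _ (Real.exp_pos a) e hepos)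
    have hpb : 0 < φ (Real.exp b • e) := hφpos _ (hsp _ (Real.exp_pos b) e hepos)
    have := gmul (Real.exp a) (Real.exp b) (Real.exp_pos a) (Real.exp_pos b)
    simp only [hh]
    rw [Real.exp_add, this, Real.log_mul hpa.ne' hpb.ne']
  have hlin := cauchy_of_measurable hmeas hadd
  refine ⟨h 1, ?_, ?_⟩
  · intro s hs x hx
    have hray : φ (s • e) = s ^ (h 1) := by
      have h1 : h (Real.log s) = Real.log s * h 1 := hlin _
      rw [hh] at h1
      simp only [Real.exp_log hs] at h1
      have hpos : 0 < φ (s • e) := hφpos _ (hsp s hs e hepos)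
      rw [Real.rpow_def_of_pos hs, ← h1, Real.exp_log hpos]
    rw [key s hs x hx, hray]
  · have h0 : h 0 = 0 := by simpa using hlin 0
    rw [hh] at h0
    simp only [Real.exp_zero, one_smul] at h0
    have hpos : 0 < φ e := hφpos e hepos
    calc φ e = Real.exp (Real.log (φ e)) := (Real.exp_log hpos).symm
      _ = 1 := by rw [h0, Real.exp_zero]
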